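/- For every PCP instance (W, W') with mailbox encoding N = Enc(W,W'), the instance has a solution if and only if the mailbox trace set of N is nonempty: (W,W') has a solution ⟺ τ(S_mb(N)) ≠ ∅. -/

import Mathlib

/-- A message with sender, receiver and payload. -/
structure Msg (P A : Type) where
  sender : P
  receiver : P
  payload : A
deriving DecidableEq

/-- Actions: send `!m` or receive `?m`. -/
inductive Act (P A : Type) where
  | send : Msg P A → Act P A
  | recv : Msg P A → Act P A
deriving DecidableEq

namespace Act
variable {P A : Type}
def msg : Act P A → Msg P A | send m => m | recv m => m
def isSend : Act P A → Bool | send _ => true | recv _ => false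
/-- The active participant of an action. -/
def active : Act P A → P | send m => m.sender | recv m => m.receiver
end Act

section Defs
variable {P A : Type}

/-- Projection onto send actions `w↓_!`. -/
def projOut (w : List (Act P A)) : List (Act P A) := w.filter Act.isSend
/-- Projection onto receive actions `w↓_?`. -/
def projIn (w : List (Act P A)) : List (Act P A) := w.filter (fun a => !a.isSend)
/-- Erase the `!`/`?` marks: `w↓_msg`. -/
def projMsg (w : List (Act P A)) : List (Msg P A) := w.map Act.msg
/-- Projection onto actions in which `p` is active: `w↓_p`. -/
def projPeer [DecidableEq P] (p : P) (w : List (Act P A)) : List (Act P A) :=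
  w.filter (fun a => decide (a.active = p))
/-- Projection onto actions involving only participants in `{p, q}`. -/
def projPQ [DecidableEq P] (p q : P) (w : List (Act P A)) : List (Act P A) :=
  w.filter (fun a =>
    (decide (a.msg.sender = p) || decide (a.msg.sender = q)) &&
    (decide (a.msg.receiver = p) || decide (a.msg.receiver = q)))

/-- A network of communicating automata. -/
structure Network (P A : Type) where
  State : P → Type
  init : ∀ p, State p
  trans : ∀ p, State p → Act P A → State p → Prop
  final : ∀ p, Set (State p)
  Msgs : Set (Msg P A)

/-- Well-formedness: each automaton only performs actions in which it is active,
on messages of the network. -/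
def Network.WF (N : Network P A) : Prop :=
  ∀ p s a s', N.trans p s a s' → a.msg ∈ N.Msgs ∧ a.active = p

/-- The set of participants sending to `p`. -/
def senders (N : Network P A) (p : P) : Set P :=
  {q | ∃ m ∈ N.Msgs, m.sender = q ∧ m.receiver = p}

/-- Directed edge of the topology. -/
def Network.Edge (N : Network P A) (p q : P) : Prop :=
  ∃ m ∈ N.Msgs, m.sender = p ∧ m.receiver = q

/-- The underlying undirected topology graph. -/
def topoGraph (N : Network P A) : SimpleGraph P := SimpleGraph.fromRel N.Edge

/-- Tree topology: connected, acyclic, and every participant has at most one sender. -/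
def TreeTopo (N : Network P A) : Prop :=
  (topoGraph N).IsTree ∧ ∀ p, (senders N p).Subsingleton

/-- Generic multi-step relation labelled by words of actions. -/
inductive Steps {C : Type _} (step : C → Act P A → C → Prop) : C → List (Act P A) → C → Prop where
  | nil (c : C) : Steps step c [] c
  | cons {c c' c'' : C} {a : Act P A} {w : List (Act P A)} :
      step c a c' → Steps step c' w c'' → Steps step c (a :: w) c''

variable [DecidableEq P]

/-! ### Mailbox semantics -/

structure MbConfig (N : Network P A) where
  st : ∀ p, N.State p
  buf : P → List (Msg P A)

inductive MbStep (N : Network P A) : MbConfig N → Act P A → MbConfig N → Prop where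
  | send (c : MbConfig N) (m : Msg P A) (s' : N.State m.sender) :
      N.trans m.sender (c.st m.sender) (.send m) s' →
      MbStep N c (.send m)
        ⟨Function.update c.st m.sender s',
         Function.update c.buf m.receiver (c.buf m.receiver ++ [m])⟩
  | recv (c : MbConfig N) (m : Msg P A) (s' : N.State m.receiver) (rest : List (Msg P A)) :
      N.trans m.receiver (c.st m.receiver) (.recv m) s' →
      c.buf m.receiver = m :: rest →
      MbStep N c (.recv m)
        ⟨Function.update c.st m.receiver s',
         Function.update c.buf m.receiver rest⟩

def MbInit (N : Network P A) : MbConfig N := ⟨N.init, fun _ => []⟩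
def MbFinal (N : Network P A) (c : MbConfig N) : Prop := ∀ p, c.st p ∈ N.final p
def MbReachable (N : Network P A) (c : MbConfig N) : Prop :=
  ∃ w, Steps (MbStep N) (MbInit N) w c
def MbExecs (N : Network P A) : Set (List (Act P A)) :=
  {w | ∃ c, Steps (MbStep N) (MbInit N) w c ∧ MbFinal N c}
def MbTraces (N : Network P A) : Set (List (Act P A)) := projOut '' MbExecs N

/-! ### Peer-to-peer semantics -/

structure P2pConfig (N : Network P A) where
  st : ∀ p, N.State p
  buf : P → P → List (Msg P A)

inductive P2pStep (N : Network P A) : P2pConfig N → Act P A → P2pConfig N → Prop where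
  | send (c : P2pConfig N) (m : Msg P A) (s' : N.State m.sender) :
      N.trans m.sender (c.st m.sender) (.send m) s' →
      P2pStep N c (.send m)
        ⟨Function.update c.st m.sender s',
         Function.update c.buf m.sender
           (Function.update (c.buf m.sender) m.receiver (c.buf m.sender m.receiver ++ [m]))⟩
  | recv (c : P2pConfig N) (m : Msg P A) (s' : N.State m.receiver) (rest : List (Msg P A)) :
      N.trans m.receiver (c.st m.receiver) (.recv m) s' →
      c.buf m.sender m.receiver = m :: rest →
      P2pStep N c (.recv m)
        ⟨Function.update c.st m.receiver s',
         Function.update c.buf m.sender (Function.update (c.buf m.sender) m.receiver rest)⟩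

def P2pInit (N : Network P A) : P2pConfig N := ⟨N.init, fun _ _ => []⟩
def P2pExecs (N : Network P A) : Set (List (Act P A)) :=
  {w | ∃ c, Steps (P2pStep N) (P2pInit N) w c ∧ ∀ p, c.st p ∈ N.final p}
def P2pTraces (N : Network P A) : Set (List (Act P A)) := projOut '' P2pExecs N

/-! ### Synchronous semantics -/

inductive SyncStep (N : Network P A) : (∀ p, N.State p) → Act P A → (∀ p, N.State p) → Prop where
  | comm (st : ∀ p, N.State p) (m : Msg P A) (s1 : N.State m.sender) (s2 : N.State m.receiver) :
      N.trans m.sender (st m.sender) (.send m) s1 →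
      N.trans m.receiver (st m.receiver) (.recv m) s2 →
      SyncStep N st (.send m)
        (Function.update (Function.update st m.sender s1) m.receiver s2)

def SyncExecs (N : Network P A) : Set (List (Act P A)) :=
  {w | ∃ st, Steps (SyncStep N) N.init w st ∧ ∀ p, st p ∈ N.final p}
def SyncTraces (N : Network P A) : Set (List (Act P A)) := projOut '' SyncExecs N

/-! ### Local and influenced languages -/

inductive LocalPath (N : Network P A) (p : P) : N.State p → List (Act P A) → N.State p → Prop where
  | nil (s : N.State p) : LocalPath N p s [] s
  | cons {s s' s'' : N.State p} {a : Act P A} {w : List (Act P A)} :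
      N.trans p s a s' → LocalPath N p s' w s'' → LocalPath N p s (a :: w) s''

/-- The language `L(A_p)` of the automaton of participant `p`. -/
def LocalLang (N : Network P A) (p : P) : Set (List (Act P A)) :=
  {w | ∃ s, LocalPath N p (N.init p) w s ∧ s ∈ N.final p}

/-- `L` is the family of influenced languages `L_T(A_p)` of a tree-topology network. -/
def IsInfluenced (N : Network P A) (L : P → Set (List (Act P A))) : Prop :=
  (∀ p, senders N p = ∅ → L p = LocalLang N p) ∧
  (∀ p q, senders N p = {q} →
    L p = {w ∈ LocalLang N p | ∃ v ∈ L q, projMsg (projIn w) = projMsg (projOut v)})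

/-! ### Shuffles -/

/-- One swap replacing an adjacent `!x ?y` by `?y !x`. -/
inductive SwapStep : List (Act P A) → List (Act P A) → Prop where
  | swap (u v : List (Act P A)) (x y : Msg P A) :
      SwapStep (u ++ Act.send x :: Act.recv y :: v) (u ++ Act.recv y :: Act.send x :: v)

/-- `w' ⋈_? w`: `w'` is a valid input shuffle of `w`. -/
def ValidShuffle (w' w : List (Act P A)) : Prop := Relation.ReflTransGen SwapStep w w'

/-- The shuffled language `L_⋈(p)` of a language. -/
def ShuffleLang (Lp : Set (List (Act P A))) : Set (List (Act P A)) :=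
  {w' | ∃ w ∈ Lp, ValidShuffle w' w}

/-- Insert after each send action its matching receive action. -/
def withRecvs (w : List (Act P A)) : List (Act P A) :=
  w.flatMap fun a => match a with
    | .send m => [.send m, .recv m]
    | .recv m => [.recv m]

end Defs

/-! ### Encoding of the Post Correspondence Problem into a mailbox network -/

/-- The four participants of the encoding. -/
inductive PPart where
  | pI | pW | pW' | pL
deriving DecidableEq

/-- Payloads: indices, letters of the alphabet `Γ`, and the markers `$`, `end`, `ok`. -/
inductive Pay (Γ : Type) (n : ℕ) where
  | idx (i : Fin n)
  | letter (σ : Γ)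
  | dollar
  | endm
  | ok

/-- States of the automaton `A_I`. -/
inductive SI (n : ℕ) where
  | q0 | qi (i : Fin n) | qd | qd'

/-- States of the automata `A_W` and `A_W'`. -/
inductive SW (n : ℕ) where
  | q0 | mid (i : Fin n) (j : ℕ) | qf | qd | qe

/-- States of the automaton `A_L`. -/
inductive SL (Γ : Type) where
  | q0 | qa (σ : Γ) | qe | qe' | qok | qstar

/-- Transitions of `A_I`: it guesses a sequence of indices, sending each index first to `A_W`
then to `A_W'`, and finally the end markers `$`. -/
inductive ITrans (Γ : Type) (n : ℕ) : SI n → Act PPart (Pay Γ n) → SI n → Prop where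
  | sendW (i : Fin n) : ITrans Γ n .q0 (.send ⟨.pI, .pW, .idx i⟩) (.qi i)
  | sendW' (i : Fin n) : ITrans Γ n (.qi i) (.send ⟨.pI, .pW', .idx i⟩) .q0
  | dollarW : ITrans Γ n .q0 (.send ⟨.pI, .pW, .dollar⟩) .qd
  | dollarW' : ITrans Γ n .qd (.send ⟨.pI, .pW', .dollar⟩) .qd'

/-- Transitions of `A_W` (resp. `A_W'` with `self := pW'` and the word list `ws'`): receives an
index `i` from `A_I` and sends the letters of the `i`-th word to `A_L`, then on `$` sends `end`. -/
inductive WTrans (Γ : Type) (n : ℕ) (self : PPart) (ws : Fin n → List Γ) :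
    SW n → Act PPart (Pay Γ n) → SW n → Prop where
  | start (i : Fin n) : WTrans Γ n self ws .q0 (.recv ⟨.pI, self, .idx i⟩) (.mid i 0)
  | again (i : Fin n) : WTrans Γ n self ws .qf (.recv ⟨.pI, self, .idx i⟩) (.mid i 0)
  | step (i : Fin n) (j : ℕ) (h : j + 1 < (ws i).length) :
      WTrans Γ n self ws (.mid i j)
        (.send ⟨self, .pL, .letter ((ws i).get ⟨j, Nat.lt_of_succ_lt h⟩)⟩) (.mid i (j + 1))
  | last (i : Fin n) (j : ℕ) (h : j + 1 = (ws i).length) :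
      WTrans Γ n self ws (.mid i j)
        (.send ⟨self, .pL, .letter ((ws i).get ⟨j, Nat.lt_of_lt_of_eq (Nat.lt_succ_self j) h⟩)⟩)
        .qf
  | dollar : WTrans Γ n self ws .qf (.recv ⟨.pI, self, .dollar⟩) .qd
  | sendEnd : WTrans Γ n self ws .qd (.send ⟨self, .pL, .endm⟩) .qe

/-- Transitions of `A_L`: alternately matches a letter from `A_W` against the same letter from
`A_W'`, moves to the error sink `qstar` on any mismatch, and after both `end` markers sends
`ok` to `A_I` (which nobody ever receives), reaching the accepting state `qok`. -/
inductive LTrans (Γ : Type) (n : ℕ) : SL Γ → Act PPart (Pay Γ n) → SL Γ → Prop where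
  | getW (α : Γ) : LTrans Γ n .q0 (.recv ⟨.pW, .pL, .letter α⟩) (.qa α)
  | matchW' (α : Γ) : LTrans Γ n (.qa α) (.recv ⟨.pW', .pL, .letter α⟩) .q0
  | mismatch (α β : Γ) (h : β ≠ α) : LTrans Γ n (.qa α) (.recv ⟨.pW', .pL, .letter β⟩) .qstar
  | earlyEndW' (α : Γ) : LTrans Γ n (.qa α) (.recv ⟨.pW', .pL, .endm⟩) .qstar
  | wrongOrder (α : Γ) : LTrans Γ n .q0 (.recv ⟨.pW', .pL, .letter α⟩) .qstar
  | wrongOrderEnd : LTrans Γ n .q0 (.recv ⟨.pW', .pL, .endm⟩) .qstar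
  | doubleW (α β : Γ) : LTrans Γ n (.qa α) (.recv ⟨.pW, .pL, .letter β⟩) .qstar
  | doubleWEnd (α : Γ) : LTrans Γ n (.qa α) (.recv ⟨.pW, .pL, .endm⟩) .qstar
  | afterEndW (α : Γ) : LTrans Γ n .qe (.recv ⟨.pW, .pL, .letter α⟩) .qstar
  | afterEndW' (α : Γ) : LTrans Γ n .qe (.recv ⟨.pW', .pL, .letter α⟩) .qstar
  | sinkWLetter (α : Γ) : LTrans Γ n .qstar (.recv ⟨.pW, .pL, .letter α⟩) .qstar
  | sinkW'Letter (α : Γ) : LTrans Γ n .qstar (.recv ⟨.pW', .pL, .letter α⟩) .qstar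
  | sinkWEnd : LTrans Γ n .qstar (.recv ⟨.pW, .pL, .endm⟩) .qstar
  | sinkW'End : LTrans Γ n .qstar (.recv ⟨.pW', .pL, .endm⟩) .qstar
  | endW : LTrans Γ n .q0 (.recv ⟨.pW, .pL, .endm⟩) .qe
  | endW' : LTrans Γ n .qe (.recv ⟨.pW', .pL, .endm⟩) .qe'
  | sendOk : LTrans Γ n .qe' (.send ⟨.pL, .pI, .ok⟩) .qok

def EncState (Γ : Type) (n : ℕ) : PPart → Type
  | .pI => SI n
  | .pW => SW n
  | .pW' => SW n
  | .pL => SL Γ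

/-- The mailbox encoding `Enc(W, W')` of a PCP instance `(ws, ws')`. -/
def Enc (Γ : Type) (n : ℕ) (ws ws' : Fin n → List Γ) : Network PPart (Pay Γ n) where
  State := EncState Γ n
  init := fun p => match p with
    | .pI => SI.q0
    | .pW => SW.q0
    | .pW' => SW.q0
    | .pL => SL.q0
  trans := fun p => match p with
    | .pI => fun s a s' => ITrans Γ n s a s'
    | .pW => fun s a s' => WTrans Γ n .pW ws s a s'
    | .pW' => fun s a s' => WTrans Γ n .pW' ws' s a s'
    | .pL => fun s a s' => LTrans Γ n s a s'
  final := fun p => match p with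
    | .pI => {SI.qd'}
    | .pW => {SW.qe}
    | .pW' => {SW.qe}
    | .pL => {SL.qok}
  Msgs := {m | (∃ i : Fin n, m = ⟨.pI, .pW, .idx i⟩ ∨ m = ⟨.pI, .pW', .idx i⟩) ∨
               (∃ α : Γ, m = ⟨.pW, .pL, .letter α⟩ ∨ m = ⟨.pW', .pL, .letter α⟩) ∨
               m = ⟨.pI, .pW, .dollar⟩ ∨ m = ⟨.pI, .pW', .dollar⟩ ∨
               m = ⟨.pW, .pL, .endm⟩ ∨ m = ⟨.pW', .pL, .endm⟩ ∨ m = ⟨.pL, .pI, .ok⟩}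

/-- A solution of the PCP instance : a nonempty sequence of indices on which the
concatenations of the corresponding words coincide. -/
def PCPSolution {Γ : Type} {n : ℕ} (ws ws' : Fin n → List Γ) : Prop :=
  ∃ is : List (Fin n), is ≠ [] ∧ (is.map ws).flatten = (is.map ws').flatten


/-! ### Auxiliary infrastructure -/

set_option linter.unusedSectionVars false

section Infra
variable {P A : Type} [DecidableEq P]

theorem steps_append {C : Type _} {step : C → Act P A → C → Prop} {c c' c'' : C}
    {w1 w2 : List (Act P A)} (h1 : Steps step c w1 c') (h2 : Steps step c' w2 c'') :
    Steps step c (w1 ++ w2) c'' := by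
  induction h1 with
  | nil => exact h2
  | cons hs _ ih => exact Steps.cons hs (ih h2)

/-- Messages sent to `p` in `w`, in order. -/
def sendsTo (p : P) (w : List (Act P A)) : List (Msg P A) :=
  projMsg (w.filter fun a => a.isSend && decide (a.msg.receiver = p))

/-- Messages received by `p` in `w`, in order. -/
def recvsBy (p : P) (w : List (Act P A)) : List (Msg P A) :=
  projMsg (w.filter fun a => !a.isSend && decide (a.msg.receiver = p))

variable {N : Network P A}

@[simp] theorem sendsTo_nil (p : P) : sendsTo (A := A) p [] = [] := rfl
@[simp] theorem recvsBy_nil (p : P) : recvsBy (A := A) p [] = [] := rfl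

@[simp] theorem sendsTo_send_cons (p : P) (m : Msg P A) (w : List (Act P A)) :
    sendsTo p (Act.send m :: w) = if m.receiver = p then m :: sendsTo p w else sendsTo p w := by
  simp only [sendsTo, projMsg, List.filter_cons, Act.isSend, Act.msg]
  split_ifs with h <;> simp_all [Act.msg]

@[simp] theorem sendsTo_recv_cons (p : P) (m : Msg P A) (w : List (Act P A)) :
    sendsTo p (Act.recv m :: w) = sendsTo p w := by
  simp [sendsTo, projMsg, List.filter_cons, Act.isSend]

@[simp] theorem recvsBy_send_cons (p : P) (m : Msg P A) (w : List (Act P A)) :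
    recvsBy p (Act.send m :: w) = recvsBy p w := by
  simp [recvsBy, projMsg, List.filter_cons, Act.isSend]

@[simp] theorem recvsBy_recv_cons (p : P) (m : Msg P A) (w : List (Act P A)) :
    recvsBy p (Act.recv m :: w) = if m.receiver = p then m :: recvsBy p w else recvsBy p w := by
  simp only [recvsBy, projMsg, List.filter_cons, Act.isSend, Act.msg]
  split_ifs with h <;> simp_all [Act.msg]

theorem mb_buf {c c' : MbConfig N} {w : List (Act P A)} (h : Steps (MbStep N) c w c') (p : P) :
    c.buf p ++ sendsTo p w = recvsBy p w ++ c'.buf p := by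
  induction h with
  | nil => simp
  | cons hs _ ih =>
    cases hs with
    | send m s' htr =>
      by_cases hp : m.receiver = p
      · subst hp
        simp only [Function.update_self] at ih
        simpa using ih
      · simp only [Function.update_of_ne (Ne.symm hp)] at ih
        simpa [hp] using ih
    | recv m s' rest htr hbuf =>
      by_cases hp : m.receiver = p
      · subst hp
        simp only [Function.update_self] at ih
        rw [hbuf]
        simpa using ih
      · simp only [Function.update_of_ne (Ne.symm hp)] at ih
        simpa [hp] using ih

@[simp] theorem projPeer_nil (p : P) : projPeer (A := A) p [] = [] := rfl

@[simp] theorem projPeer_send_cons (p : P) (m : Msg P A) (w : List (Act P A)) :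
    projPeer p (Act.send m :: w) =
      if m.sender = p then Act.send m :: projPeer p w else projPeer p w := by
  simp only [projPeer, List.filter_cons, Act.active]
  split_ifs with h <;> simp_all

@[simp] theorem projPeer_recv_cons (p : P) (m : Msg P A) (w : List (Act P A)) :
    projPeer p (Act.recv m :: w) =
      if m.receiver = p then Act.recv m :: projPeer p w else projPeer p w := by
  simp only [projPeer, List.filter_cons, Act.active]
  split_ifs with h <;> simp_all

theorem mb_local {c c' : MbConfig N} {w : List (Act P A)} (h : Steps (MbStep N) c w c') (p : P) :
    LocalPath N p (c.st p) (projPeer p w) (c'.st p) := by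
  induction h with
  | nil => exact LocalPath.nil _
  | cons hs _ ih =>
    cases hs with
    | send m s' htr =>
      by_cases hp : m.sender = p
      · subst hp
        simp only [Function.update_self] at ih
        rw [projPeer_send_cons, if_pos rfl]
        exact LocalPath.cons htr ih
      · rw [projPeer_send_cons, if_neg hp]
        simpa only [Function.update_of_ne (Ne.symm hp)] using ih
    | recv m s' rest htr hbuf =>
      by_cases hp : m.receiver = p
      · subst hp
        simp only [Function.update_self] at ih
        rw [projPeer_recv_cons, if_pos rfl]
        exact LocalPath.cons htr ih
      · rw [projPeer_recv_cons, if_neg hp]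
        simpa only [Function.update_of_ne (Ne.symm hp)] using ih

theorem mb_legal {c c' : MbConfig N} {w : List (Act P A)} (h : Steps (MbStep N) c w c') :
    ∀ a ∈ w, ∃ s s', N.trans a.active s a s' := by
  induction h with
  | nil => simp
  | cons hs _ ih =>
    intro a ha
    rcases List.mem_cons.1 ha with rfl | ha
    · cases hs with
      | send m s' htr => exact ⟨_, _, htr⟩
      | recv m s' rest htr _ => exact ⟨_, _, htr⟩
    · exact ih a ha

theorem prefix_snoc_eq {α : Type _} {xs ys : List α} {d : α}
    (h : xs ++ [d] <+: ys ++ [d]) (hd : d ∉ ys) : xs = ys := by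
  have hlen : xs.length + 1 ≤ ys.length + 1 := by simpa using h.length_le
  rcases lt_or_eq_of_le (Nat.le_of_succ_le_succ hlen) with hlt | heq
  · exfalso
    have h1 : (xs ++ [d])[xs.length]'(by simp) = (ys ++ [d])[xs.length]'(by simp; omega) :=
      h.getElem (by simp)
    have h2 : (xs ++ [d])[xs.length]'(by simp) = d := by
      rw [List.getElem_append_right (le_refl _)]; simp
    have h3 : (ys ++ [d])[xs.length]'(by simp; omega) = ys[xs.length]'hlt :=
      List.getElem_append_left hlt
    exact hd (h2 ▸ h1.symm ▸ h3 ▸ List.getElem_mem hlt)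
  · exact List.append_inj_left' (h.eq_of_length (by simp [heq])) (by simp)

theorem IsPrefix.filter' {α : Type _} (p : α → Bool) {l₁ l₂ : List α} (h : l₁ <+: l₂) :
    l₁.filter p <+: l₂.filter p := by
  rcases h with ⟨t, rfl⟩
  exact ⟨t.filter p, by simp [List.filter_append]⟩

end Infra


section PCPProof
variable {Γ : Type} {n : ℕ}

/-- The send word of `A_I` for index sequence `is`. -/
def Iword (is : List (Fin n)) : List (Act PPart (Pay Γ n)) :=
  is.flatMap (fun i => [.send ⟨.pI,.pW,.idx i⟩, .send ⟨.pI,.pW',.idx i⟩]) ++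
    [.send ⟨.pI,.pW,.dollar⟩, .send ⟨.pI,.pW',.dollar⟩]

/-- The word of `A_W` (resp. `A_W'`) for index sequence `js`. -/
def Wword (self : PPart) (vs : Fin n → List Γ) (js : List (Fin n)) :
    List (Act PPart (Pay Γ n)) :=
  js.flatMap (fun j => .recv ⟨.pI,self,.idx j⟩ ::
      (vs j).map (fun α => .send ⟨self,.pL,.letter α⟩)) ++
    [.recv ⟨.pI,self,.dollar⟩, .send ⟨self,.pL,.endm⟩]

/-- The word of `A_L` for matched letter sequence `βs`. -/
def Lword (βs : List Γ) : List (Act PPart (Pay Γ n)) :=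
  βs.flatMap (fun β => [.recv ⟨.pW,.pL,.letter β⟩, .recv ⟨.pW',.pL,.letter β⟩]) ++
    [.recv ⟨.pW,.pL,.endm⟩, .recv ⟨.pW',.pL,.endm⟩, .send ⟨.pL,.pI,.ok⟩]

variable {ws ws' : Fin n → List Γ}

theorem I_char {s s' : SI n} {u : List (Act PPart (Pay Γ n))}
    (h : LocalPath (Enc Γ n ws ws') .pI s u s') (hf : s' = .qd') :
    (s = .q0 → ∃ is, u = Iword is) ∧
    (∀ i, s = .qi i → ∃ is, u = Act.send ⟨.pI,.pW',.idx i⟩ :: Iword is) ∧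
    (s = .qd → u = [Act.send ⟨.pI,.pW',.dollar⟩]) ∧
    (s = .qd' → u = []) := by
  refine LocalPath.rec (motive := fun (s : SI n) (u : List (Act PPart (Pay Γ n))) (s' : SI n) _ =>
    s' = .qd' →
    (s = .q0 → ∃ is, u = Iword is) ∧
    (∀ i, s = .qi i → ∃ is, u = Act.send ⟨.pI,.pW',.idx i⟩ :: Iword is) ∧
    (s = .qd → u = [Act.send ⟨.pI,.pW',.dollar⟩]) ∧
    (s = .qd' → u = [])) ?_ ?_ h hf
  · intro s hf
    subst hf
    refine ⟨fun h => ?_, fun i h => ?_, fun h => ?_, fun h => rfl⟩ <;> simp_all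
  · intro s1 s2 s3 a w htr _ ih hf
    have ih := ih hf
    cases htr with
    | sendW i =>
      obtain ⟨is, his⟩ := ih.2.1 i rfl
      exact ⟨fun _ => ⟨i :: is, by simp [Iword, his]⟩, fun i' h => absurd h (by simp),
        fun h => absurd h (by simp), fun h => absurd h (by simp)⟩
    | sendW' i =>
      obtain ⟨is, his⟩ := ih.1 rfl
      refine ⟨fun h => absurd h (by simp), fun i' h => ?_, fun h => absurd h (by simp),
        fun h => absurd h (by simp)⟩
      cases h
      exact ⟨is, by rw [his]⟩
    | dollarW =>
      have hw := ih.2.2.1 rfl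
      exact ⟨fun _ => ⟨[], by simp [Iword, hw]⟩, fun i' h => absurd h (by simp),
        fun h => absurd h (by simp), fun h => absurd h (by simp)⟩
    | dollarW' =>
      have hw := ih.2.2.2 rfl
      exact ⟨fun h => absurd h (by simp), fun i' h => absurd h (by simp),
        fun _ => by rw [hw], fun h => absurd h (by simp)⟩

/-- Standalone path predicate for the word automata. -/
inductive WPath (self : PPart) (vs : Fin n → List Γ) :
    SW n → List (Act PPart (Pay Γ n)) → SW n → Prop where
  | nil (s : SW n) : WPath self vs s [] s
  | cons {s s1 s2 : SW n} {a w} :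
      WTrans Γ n self vs s a s1 → WPath self vs s1 w s2 → WPath self vs s (a :: w) s2

theorem toWPath_W {s s' : SW n} {u : List (Act PPart (Pay Γ n))}
    (h : LocalPath (Enc Γ n ws ws') .pW s u s') : WPath .pW ws s u s' := by
  exact LocalPath.rec (motive := fun (s : SW n) u (s' : SW n) _ => WPath .pW ws s u s')
    (fun s => WPath.nil s) (fun htr _ ih => WPath.cons htr ih) h

theorem toWPath_W' {s s' : SW n} {u : List (Act PPart (Pay Γ n))}
    (h : LocalPath (Enc Γ n ws ws') .pW' s u s') : WPath .pW' ws' s u s' := by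
  exact LocalPath.rec (motive := fun (s : SW n) u (s' : SW n) _ => WPath .pW' ws' s u s')
    (fun s => WPath.nil s) (fun htr _ ih => WPath.cons htr ih) h

theorem W_char {self : PPart} {vs : Fin n → List Γ} {s s' : SW n}
    {u : List (Act PPart (Pay Γ n))} (h : WPath self vs s u s') (hf : s' = .qe) :
    (s = .q0 → ∃ js, js ≠ [] ∧ u = Wword self vs js) ∧
    (∀ i j, s = .mid i j → ∃ js, u =
      ((vs i).drop j).map (fun α => Act.send ⟨self,.pL,.letter α⟩) ++ Wword self vs js) ∧
    (s = .qf → ∃ js, u = Wword self vs js) ∧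
    (s = .qd → u = [Act.send ⟨self,.pL,.endm⟩]) ∧
    (s = .qe → u = []) := by
  induction h with
  | nil s =>
    subst hf
    exact ⟨fun h => absurd h (by simp), fun i j h => absurd h (by simp),
      fun h => absurd h (by simp), fun h => absurd h (by simp), fun _ => rfl⟩
  | cons htr _ ih =>
    have ih := ih hf
    cases htr with
    | start i =>
      obtain ⟨js, hjs⟩ := ih.2.1 i 0 rfl
      exact ⟨fun _ => ⟨i :: js, by simp, by simp [Wword, hjs]⟩,
        fun i' j' h => absurd h (by simp), fun h => absurd h (by simp),
        fun h => absurd h (by simp), fun h => absurd h (by simp)⟩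
    | again i =>
      obtain ⟨js, hjs⟩ := ih.2.1 i 0 rfl
      exact ⟨fun h => absurd h (by simp), fun i' j' h => absurd h (by simp),
        fun _ => ⟨i :: js, by simp [Wword, hjs]⟩,
        fun h => absurd h (by simp), fun h => absurd h (by simp)⟩
    | step i j hj =>
      obtain ⟨js, hjs⟩ := ih.2.1 i (j+1) rfl
      refine ⟨fun h => absurd h (by simp), fun i' j' h => ?_,
        fun h => absurd h (by simp), fun h => absurd h (by simp),
        fun h => absurd h (by simp)⟩
      cases h
      refine ⟨js, ?_⟩
      rw [hjs, List.drop_eq_getElem_cons (Nat.lt_of_succ_lt hj)]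
      simp only [List.map_cons, List.cons_append, List.get_eq_getElem]
    | last i j hj =>
      obtain ⟨js, hjs⟩ := ih.2.2.1 rfl
      refine ⟨fun h => absurd h (by simp), fun i' j' h => ?_,
        fun h => absurd h (by simp), fun h => absurd h (by simp),
        fun h => absurd h (by simp)⟩
      cases h
      refine ⟨js, ?_⟩
      rw [hjs, List.drop_eq_getElem_cons (hj ▸ Nat.lt_succ_self j),
        List.drop_eq_nil_of_le (le_of_eq hj.symm)]
      simp only [List.map_cons, List.map_nil, List.cons_append, List.nil_append,
        List.get_eq_getElem]
    | dollar =>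
      have hw := ih.2.2.2.1 rfl
      exact ⟨fun h => absurd h (by simp), fun i' j' h => absurd h (by simp),
        fun _ => ⟨[], by simp [Wword, hw]⟩,
        fun h => absurd h (by simp), fun h => absurd h (by simp)⟩
    | sendEnd =>
      have hw := ih.2.2.2.2 rfl
      exact ⟨fun h => absurd h (by simp), fun i' j' h => absurd h (by simp),
        fun h => absurd h (by simp), fun _ => by rw [hw], fun h => absurd h (by simp)⟩

theorem L_char {s s' : SL Γ} {u : List (Act PPart (Pay Γ n))}
    (h : LocalPath (Enc Γ n ws ws') .pL s u s') (hf : s' = .qok) :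
    (s = .q0 → ∃ βs, u = Lword βs) ∧
    (∀ α, s = .qa α → ∃ βs, u = Act.recv ⟨.pW',.pL,.letter α⟩ :: Lword βs) ∧
    (s = .qe → u = [Act.recv ⟨.pW',.pL,.endm⟩, Act.send ⟨.pL,.pI,.ok⟩]) ∧
    (s = .qe' → u = [Act.send ⟨.pL,.pI,.ok⟩]) ∧
    (s = .qok → u = []) ∧
    (s = .qstar → False) := by
  refine LocalPath.rec (motive := fun (s : SL Γ) (u : List (Act PPart (Pay Γ n))) (s' : SL Γ) _ =>
    s' = .qok →
    (s = .q0 → ∃ βs, u = Lword βs) ∧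
    (∀ α, s = .qa α → ∃ βs, u = Act.recv ⟨.pW',.pL,.letter α⟩ :: Lword βs) ∧
    (s = .qe → u = [Act.recv ⟨.pW',.pL,.endm⟩, Act.send ⟨.pL,.pI,.ok⟩]) ∧
    (s = .qe' → u = [Act.send ⟨.pL,.pI,.ok⟩]) ∧
    (s = .qok → u = []) ∧
    (s = .qstar → False)) ?_ ?_ h hf
  · intro s hf
    subst hf
    exact ⟨fun h => absurd h (by simp), fun α h => absurd h (by simp),
      fun h => absurd h (by simp), fun h => absurd h (by simp),
      fun _ => rfl, fun h => by simp at h⟩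
  · intro s1 s2 s3 a w htr _ ih hf
    have ih := ih hf
    cases htr with
    | getW α =>
      obtain ⟨βs, hβ⟩ := ih.2.1 α rfl
      exact ⟨fun _ => ⟨α :: βs, by simp [Lword, hβ]⟩, fun α' h => absurd h (by simp),
        fun h => absurd h (by simp), fun h => absurd h (by simp),
        fun h => absurd h (by simp), fun h => by simp at h⟩
    | matchW' α =>
      obtain ⟨βs, hβ⟩ := ih.1 rfl
      refine ⟨fun h => absurd h (by simp), fun α' h => ?_,
        fun h => absurd h (by simp), fun h => absurd h (by simp),
        fun h => absurd h (by simp), fun h => by simp at h⟩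
      cases h
      exact ⟨βs, by rw [hβ]⟩
    | mismatch α β hαβ => exact (ih.2.2.2.2.2 rfl).elim
    | earlyEndW' α => exact (ih.2.2.2.2.2 rfl).elim
    | wrongOrder α => exact (ih.2.2.2.2.2 rfl).elim
    | wrongOrderEnd => exact (ih.2.2.2.2.2 rfl).elim
    | doubleW α β => exact (ih.2.2.2.2.2 rfl).elim
    | doubleWEnd α => exact (ih.2.2.2.2.2 rfl).elim
    | afterEndW α => exact (ih.2.2.2.2.2 rfl).elim
    | afterEndW' α => exact (ih.2.2.2.2.2 rfl).elim
    | sinkWLetter α => exact (ih.2.2.2.2.2 rfl).elim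
    | sinkW'Letter α => exact (ih.2.2.2.2.2 rfl).elim
    | sinkWEnd => exact (ih.2.2.2.2.2 rfl).elim
    | sinkW'End => exact (ih.2.2.2.2.2 rfl).elim
    | endW =>
      have hw := ih.2.2.1 rfl
      exact ⟨fun _ => ⟨[], by simp [Lword, hw]⟩, fun α' h => absurd h (by simp),
        fun h => absurd h (by simp), fun h => absurd h (by simp),
        fun h => absurd h (by simp), fun h => by simp at h⟩
    | endW' =>
      have hw := ih.2.2.2.1 rfl
      exact ⟨fun h => absurd h (by simp), fun α' h => absurd h (by simp),
        fun _ => by rw [hw], fun h => absurd h (by simp),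
        fun h => absurd h (by simp), fun h => by simp at h⟩
    | sendOk =>
      have hw := ih.2.2.2.2.1 rfl
      exact ⟨fun h => absurd h (by simp), fun α' h => absurd h (by simp),
        fun h => absurd h (by simp), fun _ => by rw [hw],
        fun h => absurd h (by simp), fun h => by simp at h⟩

/-! #### simp lemmas for projections -/

section ProjSimp
variable {P A : Type} [DecidableEq P]

@[simp] theorem Act.msg_send (m : Msg P A) : (Act.send m).msg = m := rfl
@[simp] theorem Act.msg_recv (m : Msg P A) : (Act.recv m).msg = m := rfl
@[simp] theorem Act.isSend_send (m : Msg P A) : (Act.send m).isSend = true := rfl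
@[simp] theorem Act.isSend_recv (m : Msg P A) : (Act.recv m).isSend = false := rfl
@[simp] theorem Act.active_send (m : Msg P A) : (Act.send m).active = m.sender := rfl
@[simp] theorem Act.active_recv (m : Msg P A) : (Act.recv m).active = m.receiver := rfl

@[simp] theorem projOut_nil : projOut (A := A) (P := P) [] = [] := rfl
@[simp] theorem projIn_nil : projIn (A := A) (P := P) [] = [] := rfl
@[simp] theorem projMsg_nil : projMsg (A := A) (P := P) [] = [] := rfl
@[simp] theorem projOut_send_cons (m : Msg P A) (w) :
    projOut (Act.send m :: w) = Act.send m :: projOut w := rfl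
@[simp] theorem projOut_recv_cons (m : Msg P A) (w) :
    projOut (Act.recv m :: w) = projOut w := rfl
@[simp] theorem projIn_send_cons (m : Msg P A) (w) :
    projIn (Act.send m :: w) = projIn w := rfl
@[simp] theorem projIn_recv_cons (m : Msg P A) (w) :
    projIn (Act.recv m :: w) = Act.recv m :: projIn w := rfl
@[simp] theorem projMsg_cons (a : Act P A) (w) :
    projMsg (a :: w) = a.msg :: projMsg w := rfl
@[simp] theorem projOut_append (v w : List (Act P A)) :
    projOut (v ++ w) = projOut v ++ projOut w := List.filter_append _ _
@[simp] theorem projIn_append (v w : List (Act P A)) :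
    projIn (v ++ w) = projIn v ++ projIn w := List.filter_append _ _
@[simp] theorem projMsg_append (v w : List (Act P A)) :
    projMsg (v ++ w) = projMsg v ++ projMsg w := List.map_append

theorem recvsBy_eq (p : P) (w : List (Act P A)) :
    recvsBy p w = projMsg (projIn (projPeer p w)) := by
  induction w with
  | nil => rfl
  | cons a w ih =>
    cases a with
    | send m => by_cases h : m.sender = p <;> simp [h, ih]
    | recv m => by_cases h : m.receiver = p <;> simp [h, ih]

end ProjSimp

/-! #### Word computation lemmas -/

section WordComp
variable {Γ : Type} {n : ℕ}

theorem Iword_filter_W (is : List (Fin n)) :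
    projMsg ((projOut (Iword (Γ := Γ) is)).filter
        (fun a => decide (a.msg.receiver = PPart.pW))) =
      is.map (fun i => (⟨.pI,.pW,.idx i⟩ : Msg PPart (Pay Γ n))) ++ [⟨.pI,.pW,.dollar⟩] := by
  induction is with
  | nil => simp [Iword, List.filter_cons]
  | cons i is ih => simpa [Iword, List.filter_cons] using ih

theorem Iword_filter_W' (is : List (Fin n)) :
    projMsg ((projOut (Iword (Γ := Γ) is)).filter
        (fun a => decide (a.msg.receiver = PPart.pW'))) =
      is.map (fun i => (⟨.pI,.pW',.idx i⟩ : Msg PPart (Pay Γ n))) ++ [⟨.pI,.pW',.dollar⟩] := by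
  induction is with
  | nil => simp [Iword, List.filter_cons]
  | cons i is ih => simpa [Iword, List.filter_cons] using ih

theorem Wword_recvs (self : PPart) (vs : Fin n → List Γ) (js : List (Fin n)) :
    projMsg (projIn (Wword self vs js)) =
      js.map (fun j => (⟨.pI,self,.idx j⟩ : Msg PPart (Pay Γ n))) ++ [⟨.pI,self,.dollar⟩] := by
  induction js with
  | nil => simp [Wword]
  | cons j js ih =>
    have : projIn ((vs j).map (fun α =>
        (Act.send ⟨self,.pL,.letter α⟩ : Act PPart (Pay Γ n)))) = [] := by
      induction (vs j) with
      | nil => rfl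
      | cons α αs ih2 => simpa using ih2
    simpa [Wword, this] using ih

theorem Wword_sends (self : PPart) (vs : Fin n → List Γ) (js : List (Fin n)) :
    projMsg (projOut (Wword self vs js)) =
      ((js.map vs).flatten).map (fun α => (⟨self,.pL,.letter α⟩ : Msg PPart (Pay Γ n))) ++
        [⟨self,.pL,.endm⟩] := by
  induction js with
  | nil => simp [Wword]
  | cons j js ih =>
    have h1 : projOut ((vs j).map (fun α =>
        (Act.send ⟨self,.pL,.letter α⟩ : Act PPart (Pay Γ n)))) = (vs j).map (fun α =>
        (Act.send ⟨self,.pL,.letter α⟩ : Act PPart (Pay Γ n))) := by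
      induction (vs j) with
      | nil => rfl
      | cons α αs ih2 => simpa using ih2
    have h2 : projMsg ((vs j).map (fun α =>
        (Act.send ⟨self,.pL,.letter α⟩ : Act PPart (Pay Γ n)))) = (vs j).map (fun α =>
        (⟨self,.pL,.letter α⟩ : Msg PPart (Pay Γ n))) := by
      induction (vs j) with
      | nil => rfl
      | cons α αs ih2 => simpa using ih2
    have hW : Wword self vs (j :: js) = (Act.recv ⟨.pI,self,.idx j⟩ ::
        (vs j).map (fun α => Act.send ⟨self,.pL,.letter α⟩)) ++ Wword self vs js := by
      simp [Wword]
    have hL : projMsg (projOut (Wword self vs (j :: js))) =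
        (vs j).map (fun α => (⟨self,.pL,.letter α⟩ : Msg PPart (Pay Γ n))) ++
          projMsg (projOut (Wword self vs js)) := by
      rw [hW, List.cons_append, projOut_recv_cons, projOut_append, h1, projMsg_append, h2]
    rw [hL, ih, List.map_cons, List.flatten_cons, List.map_append, List.append_assoc]

theorem Lword_recvs (βs : List Γ) :
    projMsg (projIn (Lword (n := n) βs)) =
      βs.flatMap (fun β => [(⟨.pW,.pL,.letter β⟩ : Msg PPart (Pay Γ n)), ⟨.pW',.pL,.letter β⟩]) ++
        [⟨.pW,.pL,.endm⟩, ⟨.pW',.pL,.endm⟩] := by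
  induction βs with
  | nil => simp [Lword]
  | cons β βs ih => simpa [Lword] using ih

theorem Lword_recvs_filter_W (βs : List Γ) :
    (projMsg (projIn (Lword (n := n) βs))).filter (fun m => decide (m.sender = PPart.pW)) =
      βs.map (fun β => (⟨.pW,.pL,.letter β⟩ : Msg PPart (Pay Γ n))) ++ [⟨.pW,.pL,.endm⟩] := by
  rw [Lword_recvs]
  induction βs with
  | nil => simp [List.filter_cons]
  | cons β βs ih => simpa [List.filter_cons] using ih

theorem Lword_recvs_filter_W' (βs : List Γ) :
    (projMsg (projIn (Lword (n := n) βs))).filter (fun m => decide (m.sender = PPart.pW')) =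
      βs.map (fun β => (⟨.pW',.pL,.letter β⟩ : Msg PPart (Pay Γ n))) ++ [⟨.pW',.pL,.endm⟩] := by
  rw [Lword_recvs]
  induction βs with
  | nil => simp [List.filter_cons]
  | cons β βs ih => simpa [List.filter_cons] using ih

end WordComp

/-! #### Legality-based filter identities -/

section Legal
variable {ws ws' : Fin n → List Γ}

theorem send_shape {w : List (Act PPart (Pay Γ n))}
    (hleg : ∀ a ∈ w, ∃ s s', (Enc Γ n ws ws').trans a.active s a s')
    {m : Msg PPart (Pay Γ n)} (hm : Act.send m ∈ w) :
    (m.receiver = .pW → m.sender = .pI) ∧ (m.receiver = .pW' → m.sender = .pI) ∧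
    (m.sender = .pW → m.receiver = .pL) ∧ (m.sender = .pW' → m.receiver = .pL) := by
  obtain ⟨s, s', htr⟩ := hleg _ hm
  obtain ⟨ms, mr, mp⟩ := m
  cases ms <;> cases htr <;> simp

theorem sendsTo_W_eq {w : List (Act PPart (Pay Γ n))}
    (hleg : ∀ a ∈ w, ∃ s s', (Enc Γ n ws ws').trans a.active s a s') :
    sendsTo .pW w = projMsg ((projOut (projPeer .pI w)).filter
      (fun a => decide (a.msg.receiver = PPart.pW))) := by
  unfold sendsTo projOut projPeer
  rw [List.filter_filter, List.filter_filter]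
  congr 1
  refine List.filter_congr fun a ha => ?_
  cases a with
  | recv m => simp
  | send m =>
    simp only [Act.isSend_send, Act.msg_send, Act.active_send, Bool.true_and, Bool.and_true]
    by_cases hr : m.receiver = PPart.pW
    · have := ((send_shape hleg ha).1 hr)
      simp [hr, this]
    · simp [hr]

theorem sendsTo_W'_eq {w : List (Act PPart (Pay Γ n))}
    (hleg : ∀ a ∈ w, ∃ s s', (Enc Γ n ws ws').trans a.active s a s') :
    sendsTo .pW' w = projMsg ((projOut (projPeer .pI w)).filter
      (fun a => decide (a.msg.receiver = PPart.pW'))) := by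
  unfold sendsTo projOut projPeer
  rw [List.filter_filter, List.filter_filter]
  congr 1
  refine List.filter_congr fun a ha => ?_
  cases a with
  | recv m => simp
  | send m =>
    simp only [Act.isSend_send, Act.msg_send, Act.active_send, Bool.true_and, Bool.and_true]
    by_cases hr : m.receiver = PPart.pW'
    · have := ((send_shape hleg ha).2.1 hr)
      simp [hr, this]
    · simp [hr]

/-- The `pW`-sender part of the messages sent to `pL` is the send word of `A_W`. -/
theorem sendsTo_L_filter_W {w : List (Act PPart (Pay Γ n))}
    (hleg : ∀ a ∈ w, ∃ s s', (Enc Γ n ws ws').trans a.active s a s') :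
    (sendsTo .pL w).filter (fun m => decide (m.sender = PPart.pW)) =
      projMsg (projOut (projPeer .pW w)) := by
  unfold sendsTo projOut projPeer projMsg
  rw [List.filter_map, List.filter_filter, List.filter_filter]
  congr 1
  refine List.filter_congr fun a ha => ?_
  cases a with
  | recv m => simp [Function.comp]
  | send m =>
    simp only [Function.comp, Act.isSend_send, Act.msg_send, Act.active_send,
      Bool.true_and, Bool.and_true]
    by_cases hs : m.sender = PPart.pW
    · have := ((send_shape hleg ha).2.2.1 hs)
      simp [hs, this]
    · simp [hs]

theorem sendsTo_L_filter_W' {w : List (Act PPart (Pay Γ n))}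
    (hleg : ∀ a ∈ w, ∃ s s', (Enc Γ n ws ws').trans a.active s a s') :
    (sendsTo .pL w).filter (fun m => decide (m.sender = PPart.pW')) =
      projMsg (projOut (projPeer .pW' w)) := by
  unfold sendsTo projOut projPeer projMsg
  rw [List.filter_map, List.filter_filter, List.filter_filter]
  congr 1
  refine List.filter_congr fun a ha => ?_
  cases a with
  | recv m => simp [Function.comp]
  | send m =>
    simp only [Function.comp, Act.isSend_send, Act.msg_send, Act.active_send,
      Bool.true_and, Bool.and_true]
    by_cases hs : m.sender = PPart.pW'
    · have := ((send_shape hleg ha).2.2.2 hs)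
      simp [hs, this]
    · simp [hs]

end Legal

/-! #### Backward direction -/

theorem backward_dir {ws ws' : Fin n → List Γ} {w : List (Act PPart (Pay Γ n))}
    (hw : w ∈ MbExecs (Enc Γ n ws ws')) : PCPSolution ws ws' := by
  obtain ⟨c, hsteps, hfin⟩ := hw
  have hleg := mb_legal hsteps
  have hfI : c.st .pI = SI.qd' := hfin .pI
  have hfW : c.st .pW = SW.qe := hfin .pW
  have hfW' : c.st .pW' = SW.qe := hfin .pW'
  have hfL : c.st .pL = SL.qok := hfin .pL
  obtain ⟨is, hIw⟩ := (I_char (mb_local hsteps .pI) hfI).1 rfl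
  obtain ⟨js, hjs_ne, hWw⟩ := (W_char (toWPath_W (mb_local hsteps .pW)) hfW).1 rfl
  obtain ⟨ks, hks_ne, hW'w⟩ := (W_char (toWPath_W' (mb_local hsteps .pW')) hfW').1 rfl
  obtain ⟨βs, hLw⟩ := (L_char (mb_local hsteps .pL) hfL).1 rfl
  -- A_W receives exactly the index sequence of A_I
  have hjs_is : js = is := by
    have hbufW := mb_buf hsteps .pW
    have h1 : sendsTo .pW w =
        is.map (fun i => (⟨.pI,.pW,.idx i⟩ : Msg PPart (Pay Γ n))) ++ [⟨.pI,.pW,.dollar⟩] := by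
      rw [sendsTo_W_eq hleg, hIw, Iword_filter_W]
    have h2 : recvsBy .pW w =
        js.map (fun i => (⟨.pI,.pW,.idx i⟩ : Msg PPart (Pay Γ n))) ++ [⟨.pI,.pW,.dollar⟩] := by
      rw [recvsBy_eq, hWw, Wword_recvs]
    have hpre : recvsBy .pW w <+: sendsTo .pW w := ⟨c.buf .pW, by simpa [MbInit] using hbufW.symm⟩
    rw [h1, h2] at hpre
    have := prefix_snoc_eq hpre (by simp)
    exact List.map_injective_iff.2 (fun i j h => by simpa using h) this
  have hks_is : ks = is := by
    have hbufW := mb_buf hsteps .pW'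
    have h1 : sendsTo .pW' w =
        is.map (fun i => (⟨.pI,.pW',.idx i⟩ : Msg PPart (Pay Γ n))) ++ [⟨.pI,.pW',.dollar⟩] := by
      rw [sendsTo_W'_eq hleg, hIw, Iword_filter_W']
    have h2 : recvsBy .pW' w =
        ks.map (fun i => (⟨.pI,.pW',.idx i⟩ : Msg PPart (Pay Γ n))) ++ [⟨.pI,.pW',.dollar⟩] := by
      rw [recvsBy_eq, hW'w, Wword_recvs]
    have hpre : recvsBy .pW' w <+: sendsTo .pW' w :=
      ⟨c.buf .pW', by simpa [MbInit] using hbufW.symm⟩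
    rw [h1, h2] at hpre
    have := prefix_snoc_eq hpre (by simp)
    exact List.map_injective_iff.2 (fun i j h => by simpa using h) this
  -- A_L matches the two letter streams
  have hbufL := mb_buf hsteps .pL
  have hpreL : recvsBy .pL w <+: sendsTo .pL w :=
    ⟨c.buf .pL, by simpa [MbInit] using hbufL.symm⟩
  have hLrecv : recvsBy .pL w = projMsg (projIn (Lword βs)) := by
    rw [recvsBy_eq, hLw]
  have hβW : βs = ((js.map ws).flatten) := by
    have hp := IsPrefix.filter' (fun m => decide (m.sender = PPart.pW)) hpreL
    rw [hLrecv] at hp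
    rw [Lword_recvs_filter_W, sendsTo_L_filter_W hleg, hWw, Wword_sends] at hp
    have := prefix_snoc_eq hp (by simp)
    exact List.map_injective_iff.2 (fun i j h => by simpa using h) this
  have hβW' : βs = ((ks.map ws').flatten) := by
    have hp := IsPrefix.filter' (fun m => decide (m.sender = PPart.pW')) hpreL
    rw [hLrecv] at hp
    rw [Lword_recvs_filter_W', sendsTo_L_filter_W' hleg, hW'w, Wword_sends] at hp
    have := prefix_snoc_eq hp (by simp)
    exact List.map_injective_iff.2 (fun i j h => by simpa using h) this
  refine ⟨js, hjs_ne, ?_⟩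
  rw [← hβW, hβW', hks_is, hjs_is]

/-! #### Forward direction: explicit execution construction -/

section Forward
variable {ws ws' : Fin n → List Γ}

/-- Build a network state assignment for the encoding. -/
def mkSt (sI : SI n) (sW sW' : SW n) (sL : SL Γ) : ∀ p, (Enc Γ n ws ws').State p :=
  fun p => match p with
  | .pI => sI
  | .pW => sW
  | .pW' => sW'
  | .pL => sL

def mkBuf (bI bW bW' bL : List (Msg PPart (Pay Γ n))) : PPart → List (Msg PPart (Pay Γ n)) :=
  fun p => match p with
  | .pI => bI
  | .pW => bW
  | .pW' => bW'
  | .pL => bL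

@[simp] theorem mkSt_pI (sI : SI n) (sW sW' sL) :
    mkSt (ws := ws) (ws' := ws') sI sW sW' sL PPart.pI = sI := rfl
@[simp] theorem mkSt_pW (sI : SI n) (sW sW' sL) :
    mkSt (ws := ws) (ws' := ws') sI sW sW' sL PPart.pW = sW := rfl
@[simp] theorem mkSt_pW' (sI : SI n) (sW sW' sL) :
    mkSt (ws := ws) (ws' := ws') sI sW sW' sL PPart.pW' = sW' := rfl
@[simp] theorem mkSt_pL (sI : SI n) (sW sW' sL) :
    mkSt (ws := ws) (ws' := ws') sI sW sW' sL PPart.pL = sL := rfl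
@[simp] theorem mkBuf_pI (bI bW bW' bL : List (Msg PPart (Pay Γ n))) :
    mkBuf bI bW bW' bL PPart.pI = bI := rfl
@[simp] theorem mkBuf_pW (bI bW bW' bL : List (Msg PPart (Pay Γ n))) :
    mkBuf bI bW bW' bL PPart.pW = bW := rfl
@[simp] theorem mkBuf_pW' (bI bW bW' bL : List (Msg PPart (Pay Γ n))) :
    mkBuf bI bW bW' bL PPart.pW' = bW' := rfl
@[simp] theorem mkBuf_pL (bI bW bW' bL : List (Msg PPart (Pay Γ n))) :
    mkBuf bI bW bW' bL PPart.pL = bL := rfl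

@[simp] theorem upd_mkSt_pI (sI : SI n) (sW sW' sL) (x : SI n) :
    Function.update (mkSt (ws := ws) (ws' := ws') sI sW sW' sL) PPart.pI x =
      mkSt x sW sW' sL := by
  funext p; cases p <;> simp [Function.update, mkSt] <;> rfl
@[simp] theorem upd_mkSt_pW (sI : SI n) (sW sW' sL) (x : SW n) :
    Function.update (mkSt (ws := ws) (ws' := ws') sI sW sW' sL) PPart.pW x =
      mkSt sI x sW' sL := by
  funext p; cases p <;> simp [Function.update, mkSt] <;> rfl
@[simp] theorem upd_mkSt_pW' (sI : SI n) (sW sW' sL) (x : SW n) :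
    Function.update (mkSt (ws := ws) (ws' := ws') sI sW sW' sL) PPart.pW' x =
      mkSt sI sW x sL := by
  funext p; cases p <;> simp [Function.update, mkSt] <;> rfl
@[simp] theorem upd_mkSt_pL (sI : SI n) (sW sW' sL) (x : SL Γ) :
    Function.update (mkSt (ws := ws) (ws' := ws') sI sW sW' sL) PPart.pL x =
      mkSt sI sW sW' x := by
  funext p; cases p <;> simp [Function.update, mkSt] <;> rfl
@[simp] theorem upd_mkBuf_pI (bI bW bW' bL x : List (Msg PPart (Pay Γ n))) :
    Function.update (mkBuf bI bW bW' bL) PPart.pI x = mkBuf x bW bW' bL := by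
  funext p; cases p <;> simp [Function.update, mkBuf]
@[simp] theorem upd_mkBuf_pW (bI bW bW' bL x : List (Msg PPart (Pay Γ n))) :
    Function.update (mkBuf bI bW bW' bL) PPart.pW x = mkBuf bI x bW' bL := by
  funext p; cases p <;> simp [Function.update, mkBuf]
@[simp] theorem upd_mkBuf_pW' (bI bW bW' bL x : List (Msg PPart (Pay Γ n))) :
    Function.update (mkBuf bI bW bW' bL) PPart.pW' x = mkBuf bI bW x bL := by
  funext p; cases p <;> simp [Function.update, mkBuf]
@[simp] theorem upd_mkBuf_pL (bI bW bW' bL x : List (Msg PPart (Pay Γ n))) :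
    Function.update (mkBuf bI bW bW' bL) PPart.pL x = mkBuf bI bW bW' x := by
  funext p; cases p <;> simp [Function.update, mkBuf]

theorem steps_cast {P A : Type} [DecidableEq P] {N : Network P A} {c c2 c2' : MbConfig N}
    {w w'} (h : Steps (MbStep N) c w c2) (hw : w' = w) (hc : c2 = c2') :
    Steps (MbStep N) c w' c2' := hw ▸ hc ▸ h

/-! Specialized one-step lemmas. -/

variable {sI : SI n} {sW sW' : SW n} {sL : SL Γ} {bI bW bW' bL : List (Msg PPart (Pay Γ n))}

theorem stepIW {p : Pay Γ n} {s' : SI n} (htr : ITrans Γ n sI (.send ⟨.pI,.pW,p⟩) s') :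
    MbStep (Enc Γ n ws ws') ⟨mkSt sI sW sW' sL, mkBuf bI bW bW' bL⟩ (.send ⟨.pI,.pW,p⟩)
      ⟨mkSt s' sW sW' sL, mkBuf bI (bW ++ [⟨.pI,.pW,p⟩]) bW' bL⟩ := by
  simpa using MbStep.send (N := Enc Γ n ws ws') ⟨mkSt sI sW sW' sL, mkBuf bI bW bW' bL⟩
    ⟨.pI,.pW,p⟩ s' htr

theorem stepIW' {p : Pay Γ n} {s' : SI n} (htr : ITrans Γ n sI (.send ⟨.pI,.pW',p⟩) s') :
    MbStep (Enc Γ n ws ws') ⟨mkSt sI sW sW' sL, mkBuf bI bW bW' bL⟩ (.send ⟨.pI,.pW',p⟩)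
      ⟨mkSt s' sW sW' sL, mkBuf bI bW (bW' ++ [⟨.pI,.pW',p⟩]) bL⟩ := by
  simpa using MbStep.send (N := Enc Γ n ws ws') ⟨mkSt sI sW sW' sL, mkBuf bI bW bW' bL⟩
    ⟨.pI,.pW',p⟩ s' htr

theorem stepWL {p : Pay Γ n} {s' : SW n} (htr : WTrans Γ n .pW ws sW (.send ⟨.pW,.pL,p⟩) s') :
    MbStep (Enc Γ n ws ws') ⟨mkSt sI sW sW' sL, mkBuf bI bW bW' bL⟩ (.send ⟨.pW,.pL,p⟩)
      ⟨mkSt sI s' sW' sL, mkBuf bI bW bW' (bL ++ [⟨.pW,.pL,p⟩])⟩ := by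
  simpa using MbStep.send (N := Enc Γ n ws ws') ⟨mkSt sI sW sW' sL, mkBuf bI bW bW' bL⟩
    ⟨.pW,.pL,p⟩ s' htr

theorem stepW'L {p : Pay Γ n} {s' : SW n} (htr : WTrans Γ n .pW' ws' sW' (.send ⟨.pW',.pL,p⟩) s') :
    MbStep (Enc Γ n ws ws') ⟨mkSt sI sW sW' sL, mkBuf bI bW bW' bL⟩ (.send ⟨.pW',.pL,p⟩)
      ⟨mkSt sI sW s' sL, mkBuf bI bW bW' (bL ++ [⟨.pW',.pL,p⟩])⟩ := by
  simpa using MbStep.send (N := Enc Γ n ws ws') ⟨mkSt sI sW sW' sL, mkBuf bI bW bW' bL⟩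
    ⟨.pW',.pL,p⟩ s' htr

theorem stepLI {p : Pay Γ n} {s' : SL Γ} (htr : LTrans Γ n sL (.send ⟨.pL,.pI,p⟩) s') :
    MbStep (Enc Γ n ws ws') ⟨mkSt sI sW sW' sL, mkBuf bI bW bW' bL⟩ (.send ⟨.pL,.pI,p⟩)
      ⟨mkSt sI sW sW' s', mkBuf (bI ++ [⟨.pL,.pI,p⟩]) bW bW' bL⟩ := by
  simpa using MbStep.send (N := Enc Γ n ws ws') ⟨mkSt sI sW sW' sL, mkBuf bI bW bW' bL⟩
    ⟨.pL,.pI,p⟩ s' htr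

theorem stepRW {p : Pay Γ n} {s' : SW n} {rest} (htr : WTrans Γ n .pW ws sW (.recv ⟨.pI,.pW,p⟩) s')
    (hbuf : bW = ⟨.pI,.pW,p⟩ :: rest) :
    MbStep (Enc Γ n ws ws') ⟨mkSt sI sW sW' sL, mkBuf bI bW bW' bL⟩ (.recv ⟨.pI,.pW,p⟩)
      ⟨mkSt sI s' sW' sL, mkBuf bI rest bW' bL⟩ := by
  simpa using MbStep.recv (N := Enc Γ n ws ws') ⟨mkSt sI sW sW' sL, mkBuf bI bW bW' bL⟩
    ⟨.pI,.pW,p⟩ s' rest htr (by simpa using hbuf)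

theorem stepRW' {p : Pay Γ n} {s' : SW n} {rest}
    (htr : WTrans Γ n .pW' ws' sW' (.recv ⟨.pI,.pW',p⟩) s')
    (hbuf : bW' = ⟨.pI,.pW',p⟩ :: rest) :
    MbStep (Enc Γ n ws ws') ⟨mkSt sI sW sW' sL, mkBuf bI bW bW' bL⟩ (.recv ⟨.pI,.pW',p⟩)
      ⟨mkSt sI sW s' sL, mkBuf bI bW rest bL⟩ := by
  simpa using MbStep.recv (N := Enc Γ n ws ws') ⟨mkSt sI sW sW' sL, mkBuf bI bW bW' bL⟩
    ⟨.pI,.pW',p⟩ s' rest htr (by simpa using hbuf)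

theorem stepRL {q : PPart} {p : Pay Γ n} {s' : SL Γ} {rest}
    (htr : LTrans Γ n sL (.recv ⟨q,.pL,p⟩) s') (hbuf : bL = ⟨q,.pL,p⟩ :: rest) :
    MbStep (Enc Γ n ws ws') ⟨mkSt sI sW sW' sL, mkBuf bI bW bW' bL⟩ (.recv ⟨q,.pL,p⟩)
      ⟨mkSt sI sW sW' s', mkBuf bI bW bW' rest⟩ := by
  simpa using MbStep.recv (N := Enc Γ n ws ws') ⟨mkSt sI sW sW' sL, mkBuf bI bW bW' bL⟩
    ⟨q,.pL,p⟩ s' rest htr (by simpa using hbuf)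

theorem phase1 (is : List (Fin n)) (sW sW' : SW n) (sL : SL Γ)
    (bW bW' bL : List (Msg PPart (Pay Γ n))) :
    Steps (MbStep (Enc Γ n ws ws')) ⟨mkSt .q0 sW sW' sL, mkBuf [] bW bW' bL⟩ (Iword is)
      ⟨mkSt .qd' sW sW' sL,
        mkBuf [] (bW ++ is.map (fun i => ⟨.pI,.pW,.idx i⟩) ++ [⟨.pI,.pW,.dollar⟩])
          (bW' ++ is.map (fun i => ⟨.pI,.pW',.idx i⟩) ++ [⟨.pI,.pW',.dollar⟩]) bL⟩ := by
  induction is generalizing bW bW' with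
  | nil =>
    refine steps_cast (Steps.cons (stepIW ITrans.dollarW)
      (Steps.cons (stepIW' ITrans.dollarW') (Steps.nil _))) (by simp [Iword]) (by simp)
  | cons i is ih =>
    refine steps_cast (Steps.cons (stepIW (ITrans.sendW i))
      (Steps.cons (stepIW' (ITrans.sendW' i))
        (ih (bW ++ [⟨.pI,.pW,.idx i⟩]) (bW' ++ [⟨.pI,.pW',.idx i⟩])))) (by simp [Iword]) (by simp)

/-- Loop invariant for a word automaton: from state `s` with buffer `b` it can still emit the
letters `ℓ` (then `$`/`end`). -/
abbrev GoodW (self : PPart) (vs : Fin n → List Γ) (s : SW n) (b : List (Msg PPart (Pay Γ n)))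
    (ℓ : List Γ) : Prop :=
  (∃ js : List (Fin n), s = .qf ∧ b = js.map (fun j => ⟨.pI,self,.idx j⟩) ++ [⟨.pI,self,.dollar⟩] ∧
    ℓ = (js.map vs).flatten) ∨
  (∃ (i : Fin n) (j : ℕ) (js : List (Fin n)), s = .mid i j ∧ j < (vs i).length ∧
    b = js.map (fun j => ⟨.pI,self,.idx j⟩) ++ [⟨.pI,self,.dollar⟩] ∧
    ℓ = (vs i).drop j ++ (js.map vs).flatten) ∨
  (∃ js : List (Fin n), s = .q0 ∧ js ≠ [] ∧ b = js.map (fun j => ⟨.pI,self,.idx j⟩) ++ [⟨.pI,self,.dollar⟩] ∧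
    ℓ = (js.map vs).flatten)

theorem emit_mid_W {i : Fin n} {j : ℕ} {js : List (Fin n)} {α : Γ} {ℓ : List Γ}
    (hj : j < (ws i).length)
    (hα : (ws i).drop j ++ ((js.map ws).flatten) = α :: ℓ)
    (sI : SI n) (sW' : SW n) (sL : SL Γ) (bI bW' bL : List (Msg PPart (Pay Γ n))) :
    ∃ s' : SW n,
      MbStep (Enc Γ n ws ws')
        ⟨mkSt sI (.mid i j) sW' sL,
         mkBuf bI (js.map (fun j => ⟨.pI,.pW,.idx j⟩) ++ [⟨.pI,.pW,.dollar⟩]) bW' bL⟩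
        (.send ⟨.pW,.pL,.letter α⟩)
        ⟨mkSt sI s' sW' sL,
         mkBuf bI (js.map (fun j => ⟨.pI,.pW,.idx j⟩) ++ [⟨.pI,.pW,.dollar⟩]) bW'
           (bL ++ [⟨.pW,.pL,.letter α⟩])⟩ ∧
      GoodW .pW ws s' (js.map (fun j => ⟨.pI,.pW,.idx j⟩) ++ [⟨.pI,.pW,.dollar⟩]) ℓ := by
  rw [List.drop_eq_getElem_cons hj, List.cons_append] at hα
  obtain ⟨hα1, hα2⟩ := List.cons_eq_cons.mp hα
  subst hα1
  by_cases hlast : j + 1 = (ws i).length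
  · refine ⟨.qf, ?_, Or.inl ⟨js, rfl, rfl, ?_⟩⟩
    · exact stepWL (WTrans.last i j hlast)
    · rw [← hα2, List.drop_eq_nil_of_le (le_of_eq hlast.symm), List.nil_append]
  · refine ⟨.mid i (j+1), ?_, Or.inr (Or.inl ⟨i, j+1, js, rfl, ?_, rfl, hα2.symm⟩)⟩
    · exact stepWL (WTrans.step i j (lt_of_le_of_ne hj hlast))
    · exact lt_of_le_of_ne hj hlast

theorem emitW (hne : ∀ i, ws i ≠ []) {s : SW n} {b : List (Msg PPart (Pay Γ n))} {α : Γ}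
    {ℓ : List Γ} (h : GoodW .pW ws s b (α :: ℓ))
    (sI : SI n) (sW' : SW n) (sL : SL Γ) (bI bW' bL : List (Msg PPart (Pay Γ n))) :
    ∃ (acts : List (Act PPart (Pay Γ n))) (s' : SW n) (b' : List (Msg PPart (Pay Γ n))),
      Steps (MbStep (Enc Γ n ws ws')) ⟨mkSt sI s sW' sL, mkBuf bI b bW' bL⟩ acts
        ⟨mkSt sI s' sW' sL, mkBuf bI b' bW' (bL ++ [⟨.pW,.pL,.letter α⟩])⟩ ∧
      GoodW .pW ws s' b' ℓ := by
  rcases h with ⟨js, rfl, rfl, hℓ⟩ | ⟨i, j, js, rfl, hj, rfl, hℓ⟩ | ⟨js, rfl, hjs, rfl, hℓ⟩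
  · cases js with
    | nil => simp at hℓ
    | cons j js =>
      have hα : (ws j).drop 0 ++ ((js.map ws).flatten) = α :: ℓ := by
        simpa using hℓ.symm
      obtain ⟨s', hstep, hgood⟩ := emit_mid_W (hj := (ws j).length_pos_of_ne_nil (hne j))
        (hα := hα) sI sW' sL bI bW' bL
      exact ⟨_, s', _, Steps.cons (stepRW (WTrans.again j) (by simp))
        (Steps.cons hstep (Steps.nil _)), hgood⟩
  · obtain ⟨s', hstep, hgood⟩ := emit_mid_W (hj := hj) (hα := hℓ.symm) sI sW' sL bI bW' bL
    exact ⟨_, s', _, Steps.cons hstep (Steps.nil _), hgood⟩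
  · cases js with
    | nil => exact absurd rfl hjs
    | cons j js =>
      have hα : (ws j).drop 0 ++ ((js.map ws).flatten) = α :: ℓ := by
        simpa using hℓ.symm
      obtain ⟨s', hstep, hgood⟩ := emit_mid_W (hj := (ws j).length_pos_of_ne_nil (hne j))
        (hα := hα) sI sW' sL bI bW' bL
      exact ⟨_, s', _, Steps.cons (stepRW (WTrans.start j) (by simp))
        (Steps.cons hstep (Steps.nil _)), hgood⟩

theorem endW_run (hne : ∀ i, ws i ≠ []) {s : SW n} {b : List (Msg PPart (Pay Γ n))}
    (h : GoodW .pW ws s b [])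
    (sI : SI n) (sW' : SW n) (sL : SL Γ) (bI bW' bL : List (Msg PPart (Pay Γ n))) :
    Steps (MbStep (Enc Γ n ws ws')) ⟨mkSt sI s sW' sL, mkBuf bI b bW' bL⟩
      [.recv ⟨.pI,.pW,.dollar⟩, .send ⟨.pW,.pL,.endm⟩]
      ⟨mkSt sI .qe sW' sL, mkBuf bI [] bW' (bL ++ [⟨.pW,.pL,.endm⟩])⟩ := by
  rcases h with ⟨js, rfl, rfl, hℓ⟩ | ⟨i, j, js, rfl, hj, rfl, hℓ⟩ | ⟨js, rfl, hjs, rfl, hℓ⟩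
  · cases js with
    | cons j js =>
      exfalso
      have : ws j = [] := by
        have := (List.flatten_eq_nil_iff).mp hℓ.symm
        exact this _ (by simp)
      exact hne j this
    | nil =>
      exact Steps.cons (stepRW WTrans.dollar (by simp))
        (Steps.cons (stepWL WTrans.sendEnd) (Steps.nil _))
  · exfalso
    have : (ws i).drop j = [] := by
      cases hd : (ws i).drop j with
      | nil => rfl
      | cons x xs => rw [hd] at hℓ; simp at hℓ
    rw [List.drop_eq_nil_iff] at this
    omega
  · exfalso
    cases js with
    | nil => exact absurd rfl hjs
    | cons j js =>
      have : ws j = [] := by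
        have := (List.flatten_eq_nil_iff).mp hℓ.symm
        exact this _ (by simp)
      exact hne j this

theorem emit_mid_W' {i : Fin n} {j : ℕ} {js : List (Fin n)} {α : Γ} {ℓ : List Γ}
    (hj : j < (ws' i).length)
    (hα : (ws' i).drop j ++ ((js.map ws').flatten) = α :: ℓ)
    (sI : SI n) (sW : SW n) (sL : SL Γ) (bI bW bL : List (Msg PPart (Pay Γ n))) :
    ∃ s' : SW n,
      MbStep (Enc Γ n ws ws')
        ⟨mkSt sI sW (.mid i j) sL,
         mkBuf bI bW (js.map (fun j => ⟨.pI,.pW',.idx j⟩) ++ [⟨.pI,.pW',.dollar⟩]) bL⟩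
        (.send ⟨.pW',.pL,.letter α⟩)
        ⟨mkSt sI sW s' sL,
         mkBuf bI bW (js.map (fun j => ⟨.pI,.pW',.idx j⟩) ++ [⟨.pI,.pW',.dollar⟩])
           (bL ++ [⟨.pW',.pL,.letter α⟩])⟩ ∧
      GoodW .pW' ws' s' (js.map (fun j => ⟨.pI,.pW',.idx j⟩) ++ [⟨.pI,.pW',.dollar⟩]) ℓ := by
  rw [List.drop_eq_getElem_cons hj, List.cons_append] at hα
  obtain ⟨hα1, hα2⟩ := List.cons_eq_cons.mp hα
  subst hα1
  by_cases hlast : j + 1 = (ws' i).length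
  · refine ⟨.qf, ?_, Or.inl ⟨js, rfl, rfl, ?_⟩⟩
    · exact stepW'L (WTrans.last i j hlast)
    · rw [← hα2, List.drop_eq_nil_of_le (le_of_eq hlast.symm), List.nil_append]
  · refine ⟨.mid i (j+1), ?_, Or.inr (Or.inl ⟨i, j+1, js, rfl, ?_, rfl, hα2.symm⟩)⟩
    · exact stepW'L (WTrans.step i j (lt_of_le_of_ne hj hlast))
    · exact lt_of_le_of_ne hj hlast

theorem emitW' (hne : ∀ i, ws' i ≠ []) {s : SW n} {b : List (Msg PPart (Pay Γ n))} {α : Γ}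
    {ℓ : List Γ} (h : GoodW .pW' ws' s b (α :: ℓ))
    (sI : SI n) (sW : SW n) (sL : SL Γ) (bI bW bL : List (Msg PPart (Pay Γ n))) :
    ∃ (acts : List (Act PPart (Pay Γ n))) (s' : SW n) (b' : List (Msg PPart (Pay Γ n))),
      Steps (MbStep (Enc Γ n ws ws')) ⟨mkSt sI sW s sL, mkBuf bI bW b bL⟩ acts
        ⟨mkSt sI sW s' sL, mkBuf bI bW b' (bL ++ [⟨.pW',.pL,.letter α⟩])⟩ ∧
      GoodW .pW' ws' s' b' ℓ := by
  rcases h with ⟨js, rfl, rfl, hℓ⟩ | ⟨i, j, js, rfl, hj, rfl, hℓ⟩ | ⟨js, rfl, hjs, rfl, hℓ⟩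
  · cases js with
    | nil => simp at hℓ
    | cons j js =>
      have hα : (ws' j).drop 0 ++ ((js.map ws').flatten) = α :: ℓ := by
        simpa using hℓ.symm
      obtain ⟨s', hstep, hgood⟩ := emit_mid_W' (hj := (ws' j).length_pos_of_ne_nil (hne j))
        (hα := hα) sI sW sL bI bW bL
      exact ⟨_, s', _, Steps.cons (stepRW' (WTrans.again j) (by simp))
        (Steps.cons hstep (Steps.nil _)), hgood⟩
  · obtain ⟨s', hstep, hgood⟩ := emit_mid_W' (hj := hj) (hα := hℓ.symm) sI sW sL bI bW bL
    exact ⟨_, s', _, Steps.cons hstep (Steps.nil _), hgood⟩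
  · cases js with
    | nil => exact absurd rfl hjs
    | cons j js =>
      have hα : (ws' j).drop 0 ++ ((js.map ws').flatten) = α :: ℓ := by
        simpa using hℓ.symm
      obtain ⟨s', hstep, hgood⟩ := emit_mid_W' (hj := (ws' j).length_pos_of_ne_nil (hne j))
        (hα := hα) sI sW sL bI bW bL
      exact ⟨_, s', _, Steps.cons (stepRW' (WTrans.start j) (by simp))
        (Steps.cons hstep (Steps.nil _)), hgood⟩

theorem endW'_run (hne : ∀ i, ws' i ≠ []) {s : SW n} {b : List (Msg PPart (Pay Γ n))}
    (h : GoodW .pW' ws' s b [])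
    (sI : SI n) (sW : SW n) (sL : SL Γ) (bI bW bL : List (Msg PPart (Pay Γ n))) :
    Steps (MbStep (Enc Γ n ws ws')) ⟨mkSt sI sW s sL, mkBuf bI bW b bL⟩
      [.recv ⟨.pI,.pW',.dollar⟩, .send ⟨.pW',.pL,.endm⟩]
      ⟨mkSt sI sW .qe sL, mkBuf bI bW [] (bL ++ [⟨.pW',.pL,.endm⟩])⟩ := by
  rcases h with ⟨js, rfl, rfl, hℓ⟩ | ⟨i, j, js, rfl, hj, rfl, hℓ⟩ | ⟨js, rfl, hjs, rfl, hℓ⟩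
  · cases js with
    | cons j js =>
      exfalso
      have : ws' j = [] := by
        have := (List.flatten_eq_nil_iff).mp hℓ.symm
        exact this _ (by simp)
      exact hne j this
    | nil =>
      exact Steps.cons (stepRW' WTrans.dollar (by simp))
        (Steps.cons (stepW'L WTrans.sendEnd) (Steps.nil _))
  · exfalso
    have : (ws' i).drop j = [] := by
      cases hd : (ws' i).drop j with
      | nil => rfl
      | cons x xs => rw [hd] at hℓ; simp at hℓ
    rw [List.drop_eq_nil_iff] at this
    omega
  · exfalso
    cases js with
    | nil => exact absurd rfl hjs
    | cons j js =>
      have : ws' j = [] := by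
        have := (List.flatten_eq_nil_iff).mp hℓ.symm
        exact this _ (by simp)
      exact hne j this


theorem loopRun (hne : ∀ i, ws i ≠ []) (hne' : ∀ i, ws' i ≠ []) (ℓ : List Γ) :
    ∀ (sW : SW n) (bW : List (Msg PPart (Pay Γ n))) (sW' : SW n)
      (bW' : List (Msg PPart (Pay Γ n))) (bI : List (Msg PPart (Pay Γ n))),
      GoodW .pW ws sW bW ℓ → GoodW .pW' ws' sW' bW' ℓ →
      ∃ acts, Steps (MbStep (Enc Γ n ws ws')) ⟨mkSt .qd' sW sW' .q0, mkBuf bI bW bW' []⟩ acts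
        ⟨mkSt .qd' .qe .qe .qok, mkBuf (bI ++ [⟨.pL,.pI,.ok⟩]) [] [] []⟩ := by
  induction ℓ with
  | nil =>
    intro sW bW sW' bW' bI hW hW'
    refine ⟨[.recv ⟨.pI,.pW,.dollar⟩, .send ⟨.pW,.pL,.endm⟩] ++
      ([.recv ⟨.pI,.pW',.dollar⟩, .send ⟨.pW',.pL,.endm⟩] ++
        [.recv ⟨.pW,.pL,.endm⟩, .recv ⟨.pW',.pL,.endm⟩, .send ⟨.pL,.pI,.ok⟩]), ?_⟩
    refine steps_append (endW_run hne hW .qd' sW' .q0 bI bW' []) ?_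
    refine steps_append (endW'_run hne' hW' .qd' .qe .q0 bI [] ([] ++ [⟨.pW,.pL,.endm⟩])) ?_
    refine Steps.cons (stepRL (rest := [⟨.pW',.pL,.endm⟩]) LTrans.endW (by simp)) ?_
    refine Steps.cons (stepRL (rest := []) LTrans.endW' (by simp)) ?_
    exact Steps.cons (stepLI LTrans.sendOk) (Steps.nil _)
  | cons α ℓ ih =>
    intro sW bW sW' bW' bI hW hW'
    obtain ⟨acts1, s1, b1, hs1, hg1⟩ := emitW hne hW .qd' sW' .q0 bI bW' []
    obtain ⟨acts2, s2, b2, hs2, hg2⟩ := emitW' hne' hW' .qd' s1 (.qa α) bI b1 []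
    obtain ⟨acts3, hs3⟩ := ih s1 b1 s2 b2 bI hg1 hg2
    refine ⟨acts1 ++ (.recv ⟨.pW,.pL,.letter α⟩ ::
      (acts2 ++ (.recv ⟨.pW',.pL,.letter α⟩ :: acts3))), ?_⟩
    refine steps_append hs1 ?_
    refine Steps.cons (stepRL (rest := []) (LTrans.getW α) (by simp)) ?_
    refine steps_append hs2 ?_
    exact Steps.cons (stepRL (rest := []) (LTrans.matchW' α) (by simp)) hs3

theorem forward_dir (hne : ∀ i, ws i ≠ []) (hne' : ∀ i, ws' i ≠ [])
    (h : PCPSolution ws ws') : (MbTraces (Enc Γ n ws ws')).Nonempty := by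
  obtain ⟨is, hisne, heq⟩ := h
  have h0 : (MbInit (Enc Γ n ws ws')) = ⟨mkSt .q0 .q0 .q0 .q0, mkBuf [] [] [] []⟩ := by
    have hst : (MbInit (Enc Γ n ws ws')).st = mkSt .q0 .q0 .q0 .q0 := by
      funext p; cases p <;> rfl
    have hbuf : (MbInit (Enc Γ n ws ws')).buf = mkBuf [] [] [] [] := by
      funext p; cases p <;> rfl
    have h1 : MbInit (Enc Γ n ws ws') =
        ⟨(MbInit (Enc Γ n ws ws')).st, (MbInit (Enc Γ n ws ws')).buf⟩ := rfl
    rw [h1, hst, hbuf]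
  have hs1 := phase1 (ws := ws) (ws' := ws') is .q0 .q0 .q0 [] [] []
  have hgW : GoodW .pW ws .q0
      ([] ++ is.map (fun i => ⟨.pI,.pW,.idx i⟩) ++ [⟨.pI,.pW,.dollar⟩])
      ((is.map ws).flatten) :=
    Or.inr (Or.inr ⟨is, rfl, hisne, by simp, rfl⟩)
  have hgW' : GoodW .pW' ws' .q0
      ([] ++ is.map (fun i => ⟨.pI,.pW',.idx i⟩) ++ [⟨.pI,.pW',.dollar⟩])
      ((is.map ws).flatten) :=
    Or.inr (Or.inr ⟨is, rfl, hisne, by simp, heq⟩)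
  obtain ⟨acts, hs2⟩ := loopRun hne hne' ((is.map ws).flatten) .q0 _ .q0 _ [] hgW hgW'
  refine ⟨projOut (Iword is ++ acts), ⟨Iword is ++ acts,
    ⟨⟨mkSt .qd' .qe .qe .qok, mkBuf ([] ++ [⟨.pL,.pI,.ok⟩]) [] [] []⟩, ?_, ?_⟩, rfl⟩⟩
  · rw [h0]
    exact steps_append hs1 hs2
  · intro p; cases p <;> exact rfl

end Forward



end PCPProof






/-- a PCP instance has a solution iff the mailbox trace set of its encoding
is nonempty. -/
theorem pcp_solution_iff_mb_traces_nonempty (Γ : Type) (a b : Γ) (hab : a ≠ b)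
    (n : ℕ) (ws ws' : Fin n → List Γ)
    (hne : ∀ i, ws i ≠ []) (hne' : ∀ i, ws' i ≠ []) :
    PCPSolution ws ws' ↔ MbTraces (Enc Γ n ws ws') ≠ ∅ := by
  constructor
  · intro h
    exact (forward_dir hne hne' h).ne_empty
  · intro hemp
    obtain ⟨t, w, hw, -⟩ := Set.nonempty_iff_ne_empty.mpr hemp
    exact backward_dir hw
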